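/- Let H and K be complex inner product spaces with dim(H) ≥ 2, and let T : H → K be a real-linear isometry preserving orthogonality. If there exists a non-zero point x₀ ∈ H such that i T(x₀) lies in the image T(H), then T is complex-linear or conjugate-linear. -/

import Mathlib

open scoped ComplexInnerProductSpace

set_option maxHeartbeats 1000000 in
/-- If a real-linear isometry `T` preserving orthogonality between complex inner
product spaces (`dim H ≥ 2`) satisfies `i T(x₀) ∈ T(H)` for some non-zero `x₀`,
then `T` is complex-linear or conjugate-linear. -/
theorem complexLinear_or_conjugateLinear_of_smul_I_mem_range
    {H K : Type*} [NormedAddCommGroup H] [InnerProductSpace ℂ H]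
    [NormedAddCommGroup K] [InnerProductSpace ℂ K]
    (hdim : 2 ≤ Module.rank ℂ H)
    (T : H → K)
    (hadd : ∀ x y, T (x + y) = T x + T y)
    (hsmul : ∀ (r : ℝ) (x : H), T (r • x) = r • T x)
    (hiso : ∀ x, ‖T x‖ = ‖x‖)
    (hop : ∀ x y : H, ⟪x, y⟫ = 0 → ⟪T x, T y⟫ = 0)
    (hx₀ : ∃ x₀ : H, x₀ ≠ 0 ∧ Complex.I • T x₀ ∈ Set.range T) :
    (∀ (l : ℂ) (x : H), T (l • x) = l • T x) ∨
      (∀ (l : ℂ) (x : H), T (l • x) = (starRingEnd ℂ l) • T x) := by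
  classical
  obtain ⟨x₀, hx₀ne, y₀, hy₀⟩ := hx₀
  -- basic facts
  have hT0 : T 0 = 0 := by
    have h := hadd 0 0
    rw [add_zero] at h
    exact (left_eq_add.mp h)
  have hsC : ∀ (r : ℝ) (x : H), T ((r : ℂ) • x) = (r : ℂ) • T x := by
    intro r x
    rw [Complex.coe_smul, Complex.coe_smul, hsmul]
  have hre : ∀ u v : H, (⟪T u, T v⟫ : ℂ).re = (⟪u, v⟫ : ℂ).re := by
    intro u v
    have h1 : ‖u + v‖ ^ 2 = ‖u‖ ^ 2 + 2 * (⟪T u, T v⟫ : ℂ).re + ‖v‖ ^ 2 := by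
      have h := norm_add_sq (𝕜 := ℂ) (T u) (T v)
      rw [← hadd] at h
      simpa [hiso] using h
    have h2 : ‖u + v‖ ^ 2 = ‖u‖ ^ 2 + 2 * (⟪u, v⟫ : ℂ).re + ‖v‖ ^ 2 := by
      simpa using norm_add_sq (𝕜 := ℂ) u v
    linarith
  have hnx₀ : ‖x₀‖ ≠ 0 := norm_ne_zero_iff.mpr hx₀ne
  have hxx : (⟪x₀, x₀⟫ : ℂ) = ((‖x₀‖ : ℂ)) ^ 2 := inner_self_eq_norm_sq_to_K x₀
  have hn2 : ((‖x₀‖ : ℂ)) ^ 2 ≠ 0 := pow_ne_zero _ (by simpa using hnx₀)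
  -- y₀ = c • x₀
  set c : ℂ := ⟪x₀, y₀⟫ / ((‖x₀‖ : ℂ)) ^ 2 with hcdef
  set z : H := y₀ - c • x₀ with hzdef
  have hzx : (⟪x₀, z⟫ : ℂ) = 0 := by
    rw [hzdef, inner_sub_right, inner_smul_right, hxx, hcdef]
    field_simp
    rw [div_self (by exact_mod_cast hnx₀), sub_self, mul_zero]
  have hzx' : (⟪z, x₀⟫ : ℂ) = 0 := by
    rw [← inner_conj_symm, hzx, map_zero]
  have hTzx : (⟪T z, T x₀⟫ : ℂ) = 0 := hop _ _ hzx'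
  have hTizx : (⟪T (Complex.I • z), T x₀⟫ : ℂ) = 0 := by
    apply hop
    rw [inner_smul_left, hzx', mul_zero]
  have hzy : (⟪z, y₀⟫ : ℂ) = 0 := by
    have h1 : (⟪z, y₀⟫ : ℂ).re = 0 := by
      rw [← hre z y₀, hy₀, inner_smul_right, hTzx, mul_zero, Complex.zero_re]
    have h2 : (⟪z, y₀⟫ : ℂ).im = 0 := by
      have h2' : (⟪T (Complex.I • z), T y₀⟫ : ℂ) = 0 := by
        rw [hy₀, inner_smul_right, hTizx, mul_zero]
      have h2'' : (⟪Complex.I • z, y₀⟫ : ℂ).re = 0 := by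
        rw [← hre, h2', Complex.zero_re]
      rw [inner_smul_left, Complex.conj_I] at h2''
      simpa [Complex.mul_re] using h2''
    apply Complex.ext <;> simp [h1, h2]
  have hz0 : z = 0 := by
    have hy₀' : y₀ = z + c • x₀ := by rw [hzdef]; abel
    have h : (⟪z, z⟫ : ℂ) = 0 := by
      have h := hzy
      rw [hy₀', inner_add_right, inner_smul_right, hzx', mul_zero, add_zero] at h
      exact h
    exact inner_self_eq_zero.mp h
  have hy₀c : y₀ = c • x₀ := by
    have h := hz0
    rw [hzdef, sub_eq_zero] at h
    exact h
  have hnc : ‖c‖ = 1 := by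
    have h1 : ‖y₀‖ = ‖x₀‖ := by
      rw [← hiso y₀, hy₀, norm_smul]
      simp [hiso]
    rw [hy₀c, norm_smul] at h1
    have : ‖c‖ * ‖x₀‖ = 1 * ‖x₀‖ := by rw [one_mul]; exact h1
    exact mul_right_cancel₀ hnx₀ this
  have hdec : ∀ (l : ℂ) (x : H), l • x = (l.re : ℂ) • x + (l.im : ℂ) • (Complex.I • x) := by
    intro l x
    rw [smul_smul, ← add_smul]
    congr 1
    exact (Complex.re_add_im l).symm
  have hTdec : ∀ (l : ℂ) (x : H),
      T (l • x) = (l.re : ℂ) • T x + (l.im : ℂ) • T (Complex.I • x) := by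
    intro l x
    rw [hdec l x, hadd, hsC, hsC]
  have hTxx : (⟪T x₀, T x₀⟫ : ℂ) = ((‖x₀‖ : ℂ)) ^ 2 := by
    rw [← hiso x₀]
    exact inner_self_eq_norm_sq_to_K (T x₀)
  have hreIT : (⟪T x₀, T (Complex.I • x₀)⟫ : ℂ).re = 0 := by
    rw [hre, inner_smul_right, hxx]
    simp [Complex.mul_re, ← Complex.ofReal_pow]
  have key : (c.re : ℂ) • T x₀ + (c.im : ℂ) • T (Complex.I • x₀) = Complex.I • T x₀ := by
    rw [← hTdec, ← hy₀c, hy₀]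
  have hpow : ((‖x₀‖ : ℂ)) ^ 2 = ((‖x₀‖ ^ 2 : ℝ) : ℂ) := by push_cast; ring
  have hcre : c.re = 0 := by
    have h : (⟪x₀, y₀⟫ : ℂ).re = 0 := by
      rw [← hre, hy₀, inner_smul_right, hTxx, hpow, Complex.mul_re, Complex.I_re,
        Complex.I_im, Complex.ofReal_re, Complex.ofReal_im]
      ring
    rw [hy₀c, inner_smul_right, hxx, hpow, Complex.mul_re, Complex.ofReal_re,
      Complex.ofReal_im] at h
    have hn : ‖x₀‖ ^ 2 ≠ 0 := pow_ne_zero _ hnx₀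
    have h2 : c.re * ‖x₀‖ ^ 2 = 0 := by linarith
    rcases mul_eq_zero.mp h2 with h' | h'
    · exact h'
    · exact absurd h' hn
  have hcimsq : c.im * c.im = 1 := by
    have h1 : Complex.normSq c = 1 := by
      rw [← Complex.sq_norm, hnc]; norm_num
    rw [Complex.normSq_apply, hcre] at h1
    linarith
  set ε : ℂ := (c.im : ℂ) with hεdef
  have hε2 : ε * ε = 1 := by
    rw [hεdef, ← Complex.ofReal_mul, hcimsq, Complex.ofReal_one]
  have hε1 : ε = 1 ∨ ε = -1 := by
    rcases mul_self_eq_one_iff.mp hcimsq with h | h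
    · left; rw [hεdef, h, Complex.ofReal_one]
    · right; rw [hεdef, h]; push_cast; ring
  have hεnorm : ‖ε‖ = 1 := by
    rcases hε1 with h | h <;> rw [h] <;> simp
  -- P x₀
  have hPx₀ : T (Complex.I • x₀) = ε • (Complex.I • T x₀) := by
    have key2 : ε • T (Complex.I • x₀) = Complex.I • T x₀ := by
      rw [← key, hcre]
      simp [hεdef]
    have h := congrArg (fun w : K => ε • w) key2
    simp only [smul_smul, hε2, one_smul] at h
    rw [h, smul_smul]
  -- propagation to orthogonal unit vectors
  have hstep : ∀ x y : H, ‖x‖ = 1 → ‖y‖ = 1 → (⟪x, y⟫ : ℂ) = 0 →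
      T (Complex.I • x) = ε • (Complex.I • T x) →
      T (Complex.I • y) = ε • (Complex.I • T y) := by
    intro x y hx1 hy1 hxy hx
    have hyx : (⟪y, x⟫ : ℂ) = 0 := by rw [← inner_conj_symm, hxy, map_zero]
    have hTxy : (⟪T x, T y⟫ : ℂ) = 0 := hop _ _ hxy
    have hTxIy : (⟪T x, T (Complex.I • y)⟫ : ℂ) = 0 :=
      hop _ _ (by rw [inner_smul_right, hxy, mul_zero])
    have hTIyx : (⟪T (Complex.I • y), T x⟫ : ℂ) = 0 := by
      rw [← inner_conj_symm, hTxIy, map_zero]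
    have hxxu : (⟪x, x⟫ : ℂ) = 1 := by
      rw [inner_self_eq_norm_sq_to_K, hx1]; norm_num
    have hyyu : (⟪y, y⟫ : ℂ) = 1 := by
      rw [inner_self_eq_norm_sq_to_K, hy1]; norm_num
    have hTxxu : (⟪T x, T x⟫ : ℂ) = 1 := by
      rw [inner_self_eq_norm_sq_to_K, hiso, hx1]; norm_num
    have horth : (⟪x + Complex.I • y, Complex.I • x + y⟫ : ℂ) = 0 := by
      rw [inner_add_left, inner_add_right, inner_add_right, inner_smul_left,
        inner_smul_right, inner_smul_right, inner_smul_left, hxxu, hyyu, hxy, hyx,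
        Complex.conj_I]
      ring
    have hT0' : (⟪T x + T (Complex.I • y), T (Complex.I • x) + T y⟫ : ℂ) = 0 := by
      rw [← hadd, ← hadd]
      exact hop _ _ horth
    have hIyy : (⟪T (Complex.I • y), T y⟫ : ℂ) = -(ε * Complex.I) := by
      have h := hT0'
      rw [inner_add_left, inner_add_right, inner_add_right, hx] at h
      simp only [inner_smul_right] at h
      rw [hTxxu, hTxy, hTIyx] at h
      linear_combination h
    have hTIy1 : ‖T (Complex.I • y)‖ = 1 := by
      rw [hiso, norm_smul]
      simp [hy1]
    have hTy1 : ‖T y‖ = 1 := by rw [hiso, hy1]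
    have hnd : ‖T (Complex.I • y) - ε • (Complex.I • T y)‖ ^ 2 = 0 := by
      rw [norm_sub_sq (𝕜 := ℂ)]
      have h2 : ‖ε • (Complex.I • T y)‖ = 1 := by
        rw [norm_smul, norm_smul, hεnorm, hTy1]
        simp
      have h3 : (⟪T (Complex.I • y), ε • (Complex.I • T y)⟫ : ℂ).re = 1 := by
        rw [inner_smul_right, inner_smul_right, hIyy]
        have hscal : ε * (Complex.I * -(ε * Complex.I)) = 1 := by
          calc ε * (Complex.I * -(ε * Complex.I))
              = -(ε * ε) * (Complex.I * Complex.I) := by ring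
            _ = ε * ε := by rw [Complex.I_mul_I]; ring
            _ = 1 := hε2
        rw [hscal]
        simp
      rw [hTIy1, h2]
      simp only [RCLike.re_to_complex]
      rw [h3]
      norm_num
    have hnd0 : T (Complex.I • y) - ε • (Complex.I • T y) = 0 :=
      norm_eq_zero.mp (by
        have := hnd
        nlinarith [norm_nonneg (T (Complex.I • y) - ε • (Complex.I • T y))])
    exact sub_eq_zero.mp hnd0
  -- closure properties of P
  have hPsmul : ∀ (r : ℝ) (v : H), T (Complex.I • v) = ε • (Complex.I • T v) →
      T (Complex.I • (r • v)) = ε • (Complex.I • T (r • v)) := by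
    intro r v hv
    rw [smul_comm, hsmul, hv, hsmul, smul_comm r ε, smul_comm r Complex.I]
  have hPadd : ∀ u w : H, T (Complex.I • u) = ε • (Complex.I • T u) →
      T (Complex.I • w) = ε • (Complex.I • T w) →
      T (Complex.I • (u + w)) = ε • (Complex.I • T (u + w)) := by
    intro u w hu hw
    rw [smul_add, hadd, hu, hw, hadd, smul_add, smul_add]
  have hPI : ∀ v : H, T (Complex.I • v) = ε • (Complex.I • T v) →
      T (Complex.I • (Complex.I • v)) = ε • (Complex.I • T (Complex.I • v)) := by
    intro v hv
    rw [hv, smul_smul, Complex.I_mul_I, neg_one_smul]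
    have hneg : T (-v) = -T v := by
      have h := hsmul (-1) v
      simpa using h
    rw [hneg, smul_smul, smul_smul, smul_smul]
    have hscal : ε * Complex.I * ε * Complex.I = -1 := by
      calc ε * Complex.I * ε * Complex.I = (ε * ε) * (Complex.I * Complex.I) := by ring
        _ = -1 := by rw [hε2, Complex.I_mul_I]; ring
    rw [hscal, neg_one_smul]
  -- P holds for anything orthogonal to a nonzero vector with P
  have hPorth : ∀ v : H, v ≠ 0 → T (Complex.I • v) = ε • (Complex.I • T v) →
      ∀ w : H, (⟪v, w⟫ : ℂ) = 0 →
      T (Complex.I • w) = ε • (Complex.I • T w) := by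
    intro v hvne hv w hvw
    by_cases hw : w = 0
    · subst hw
      simp [hT0]
    · have hwne : ‖w‖ ≠ 0 := norm_ne_zero_iff.mpr hw
      have hvn : ‖v‖ ≠ 0 := norm_ne_zero_iff.mpr hvne
      have h1 : T (Complex.I • (‖v‖⁻¹ • v)) = ε • (Complex.I • T (‖v‖⁻¹ • v)) :=
        hPsmul _ _ hv
      have hinner : (⟪(‖v‖⁻¹ : ℝ) • v, (‖w‖⁻¹ : ℝ) • w⟫ : ℂ) = 0 := by
        rw [← Complex.coe_smul, ← Complex.coe_smul, inner_smul_left, inner_smul_right, hvw]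
        ring
      have h2 : T (Complex.I • (‖w‖⁻¹ • w)) = ε • (Complex.I • T (‖w‖⁻¹ • w)) :=
        hstep _ _ (norm_smul_inv_norm hvne) (norm_smul_inv_norm hw) hinner h1
      have h3 := hPsmul ‖w‖ _ h2
      rwa [smul_inv_smul₀ hwne] at h3
  -- P holds everywhere
  have hPall : ∀ v : H, T (Complex.I • v) = ε • (Complex.I • T v) := by
    intro v
    set d : ℂ := ⟪x₀, v⟫ / ((‖x₀‖ : ℂ)) ^ 2 with hddef
    set u : H := v - d • x₀ with hudef
    have hu : (⟪x₀, u⟫ : ℂ) = 0 := by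
      rw [hudef, inner_sub_right, inner_smul_right, hxx, hddef]
      field_simp
      rw [div_self (by exact_mod_cast hnx₀), sub_self, mul_zero]
    have hPu : T (Complex.I • u) = ε • (Complex.I • T u) := hPorth x₀ hx₀ne hPx₀ u hu
    have hPdx : T (Complex.I • (d • x₀)) = ε • (Complex.I • T (d • x₀)) := by
      have h1 := hPsmul d.re x₀ hPx₀
      have h2 := hPsmul d.im _ (hPI x₀ hPx₀)
      have h3 := hPadd _ _ h1 h2
      have heq : (d.re : ℝ) • x₀ + (d.im : ℝ) • (Complex.I • x₀) = d • x₀ := by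
        rw [← Complex.coe_smul, ← Complex.coe_smul, ← hdec]
      rwa [heq] at h3
    have h4 := hPadd _ _ hPdx hPu
    have heq : d • x₀ + u = v := by rw [hudef]; abel
    rwa [heq] at h4
  -- conclusion
  rcases hε1 with h1 | h1
  · left
    intro l x
    rw [hTdec l x, hPall x, h1, one_smul, smul_smul, ← add_smul, Complex.re_add_im]
  · right
    intro l x
    rw [hTdec l x, hPall x, h1]
    have hconj : (starRingEnd ℂ l) = (l.re : ℂ) + (l.im : ℂ) * ((-1 : ℂ) * Complex.I) := by
      apply Complex.ext <;> simp
    rw [hconj, add_smul, mul_smul, mul_smul]
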